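/- For a single variable δ and formal power series τ with τ > 0 (or τ invertible), the identity cosh(δ D)(τ ∘ τ) = exp(2 cosh(δ ∂) log τ) holds as an identity of formal power series in δ, where D is the Hirota operator and ∂ the ordinary derivative. -/

import Mathlib

open Polynomial

/-- The `n`-th Hirota bilinear derivative
`(Dⁿ f∘g)(t) = (∂_t - ∂_s)ⁿ f(t)g(s)|_{s=t} = Σ_{k=0}^n (-1)^{n-k} C(n,k) f^{(k)} g^{(n-k)}`. -/
noncomputable def hirotaD (f g : Polynomial ℝ) (n : ℕ) : Polynomial ℝ :=
  ∑ k ∈ Finset.range (n + 1),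
    (((-1 : ℝ) ^ (n - k)) * (n.choose k : ℝ)) • (derivative^[k] f * derivative^[n - k] g)

/-- Taylor expansion of a real polynomial. -/
lemma taylor_expand (τ : Polynomial ℝ) (t δ : ℝ) (N : ℕ) (hN : τ.natDegree ≤ N) :
    τ.eval (t + δ) = ∑ k ∈ Finset.range (N + 1),
      (derivative^[k] τ).eval t * δ ^ k / (k.factorial : ℝ) := by
  have h : ((taylor t τ).natDegree) < N + 1 := by
    rw [natDegree_taylor]; omega
  have hev := Polynomial.eval_eq_sum_range' h δ
  rw [show t + δ = δ + t by ring, ← Polynomial.taylor_eval t τ δ, hev]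
  refine Finset.sum_congr rfl fun k _ => ?_
  rw [Polynomial.taylor_coeff]
  have hk' : (k.factorial : ℝ) * (Polynomial.hasseDeriv k τ).eval t
      = (derivative^[k] τ).eval t := by
    have hk := congrFun (Polynomial.factorial_smul_hasseDeriv (R := ℝ) k) τ
    have := congrArg (fun p => Polynomial.eval t p) hk
    simpa using this
  have hfac : (k.factorial : ℝ) ≠ 0 := by positivity
  field_simp
  rw [← hk']
  ring

/-- The odd Hirota derivatives of `τ∘τ` vanish. -/
lemma hirotaD_odd (τ : Polynomial ℝ) (m : ℕ) (hm : Odd m) : hirotaD τ τ m = 0 := by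
  set f : ℕ → Polynomial ℝ := fun k =>
    (((-1 : ℝ) ^ (m - k)) * (m.choose k : ℝ)) • (derivative^[k] τ * derivative^[m - k] τ)
    with hf
  have key : hirotaD τ τ m = -(hirotaD τ τ m) := by
    calc hirotaD τ τ m = ∑ k ∈ Finset.range (m + 1), f (m + 1 - 1 - k) :=
          (Finset.sum_range_reflect f (m + 1)).symm
      _ = ∑ k ∈ Finset.range (m + 1), -(f k) := by
          refine Finset.sum_congr rfl fun k hk => ?_
          rw [Finset.mem_range, Nat.lt_succ_iff] at hk
          have h1 : m + 1 - 1 - k = m - k := by omega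
          have h2 : m - (m - k) = k := by omega
          have ha : (-1 : ℝ) ^ (m - k) * (-1 : ℝ) ^ (m - k) = 1 := by
            rw [← pow_add]
            exact Even.neg_one_pow ⟨m - k, rfl⟩
          have hab : (-1 : ℝ) ^ (m - k) * (-1 : ℝ) ^ k = -1 := by
            rw [← pow_add, show m - k + k = m by omega]
            exact hm.neg_one_pow
          have hsign : (-1 : ℝ) ^ k = -(-1 : ℝ) ^ (m - k) := by
            calc (-1 : ℝ) ^ k = ((-1 : ℝ) ^ (m - k) * (-1 : ℝ) ^ (m - k)) * (-1) ^ k := by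
                  rw [ha, one_mul]
              _ = (-1 : ℝ) ^ (m - k) * ((-1 : ℝ) ^ (m - k) * (-1) ^ k) := by ring
              _ = -(-1 : ℝ) ^ (m - k) := by rw [hab]; ring
          rw [hf]
          simp only [h1, h2]
          rw [Nat.choose_symm hk, hsign,
            mul_comm (derivative^[m - k] τ) (derivative^[k] τ)]
          module
      _ = -(hirotaD τ τ m) := by rw [Finset.sum_neg_distrib]; rfl
  ext n
  have := congrArg (fun q => q.coeff n) key
  simp only [Polynomial.coeff_neg] at this
  simpa using by linarith

/-- Summing only even indices when odd terms vanish. -/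
lemma sum_even_of_odd_zero (c : ℕ → ℝ) (hodd : ∀ n, c (2 * n + 1) = 0) (M : ℕ) :
    ∑ m ∈ Finset.range (2 * M), c m = ∑ n ∈ Finset.range M, c (2 * n) := by
  induction M with
  | zero => simp
  | succ M ih =>
      rw [show 2 * (M + 1) = (2 * M + 1) + 1 by ring, Finset.sum_range_succ,
        Finset.sum_range_succ, Finset.sum_range_succ, ih, hodd M]
      ring

/-- The scalar identity relating the Hirota term with the Cauchy product term. -/
lemma scalar_identity (δ x y : ℝ) (m k : ℕ) (hk : k ≤ m) :
    δ ^ m / (m.factorial : ℝ) * ((-1 : ℝ) ^ (m - k) * (m.choose k : ℝ) * (x * y))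
      = (x * δ ^ k / (k.factorial : ℝ)) * (y * (-δ) ^ (m - k) / ((m - k).factorial : ℝ)) := by
  have hδ : δ ^ k * δ ^ (m - k) = δ ^ m := by
    rw [← pow_add]; congr 1; omega
  have hneg : (-δ) ^ (m - k) = (-1 : ℝ) ^ (m - k) * δ ^ (m - k) := by
    rw [neg_pow]
  rw [Nat.cast_choose ℝ hk, hneg]
  have h1 : (m.factorial : ℝ) ≠ 0 := by positivity
  have h2 : (k.factorial : ℝ) ≠ 0 := by positivity
  have h3 : ((m - k).factorial : ℝ) ≠ 0 := by positivity
  field_simp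
  linear_combination (-(x * y)) * hδ

theorem cosh_hirota_identity (τ : Polynomial ℝ) (δ t : ℝ) (N : ℕ)
    (hN : τ.natDegree ≤ N)
    (h1 : 0 < τ.eval (t + δ)) (h2 : 0 < τ.eval (t - δ)) :
    ∑ n ∈ Finset.range (N + 1),
        (δ ^ (2 * n) / ((2 * n).factorial : ℝ)) * (hirotaD τ τ (2 * n)).eval t
      = Real.exp (2 * ((Real.log (τ.eval (t + δ)) + Real.log (τ.eval (t - δ))) / 2)) := by
  -- RHS is just the product τ(t+δ)·τ(t-δ)
  have hRHS : Real.exp (2 * ((Real.log (τ.eval (t + δ)) + Real.log (τ.eval (t - δ))) / 2))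
      = τ.eval (t + δ) * τ.eval (t - δ) := by
    rw [show 2 * ((Real.log (τ.eval (t + δ)) + Real.log (τ.eval (t - δ))) / 2)
        = Real.log (τ.eval (t + δ)) + Real.log (τ.eval (t - δ)) by ring,
      Real.exp_add, Real.exp_log h1, Real.exp_log h2]
  rw [hRHS]
  set a : ℕ → ℝ := fun k => (derivative^[k] τ).eval t * δ ^ k / (k.factorial : ℝ) with ha
  set b : ℕ → ℝ := fun k => (derivative^[k] τ).eval t * (-δ) ^ k / (k.factorial : ℝ) with hb
  have hA : τ.eval (t + δ) = ∑ k ∈ Finset.range (N + 1), a k := taylor_expand τ t δ N hN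
  have hB : τ.eval (t - δ) = ∑ k ∈ Finset.range (N + 1), b k := by
    rw [sub_eq_add_neg]; exact taylor_expand τ t (-δ) N hN
  have hzero : ∀ k, N < k → (derivative^[k] τ) = 0 := fun k hk =>
    Polynomial.iterate_derivative_eq_zero (lt_of_le_of_lt hN hk)
  have ha0 : ∀ k, N < k → a k = 0 := by
    intro k hk; rw [ha]; simp [hzero k hk]
  have hb0 : ∀ k, N < k → b k = 0 := by
    intro k hk; rw [hb]; simp [hzero k hk]
  set c : ℕ → ℝ := fun m => δ ^ m / (m.factorial : ℝ) * (hirotaD τ τ m).eval t with hc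
  -- each Hirota term is a diagonal of the Cauchy product
  have hcm : ∀ m, c m = ∑ k ∈ Finset.range (m + 1), a k * b (m - k) := by
    intro m
    rw [hc]
    simp only [hirotaD, Polynomial.eval_finset_sum, Polynomial.eval_smul, Polynomial.eval_mul,
      smul_eq_mul, Finset.mul_sum]
    refine Finset.sum_congr rfl fun k hk => ?_
    rw [Finset.mem_range, Nat.lt_succ_iff] at hk
    rw [ha, hb]
    simpa using scalar_identity δ ((derivative^[k] τ).eval t)
      ((derivative^[m - k] τ).eval t) m k hk
  -- odd terms vanish
  have hodd : ∀ n, c (2 * n + 1) = 0 := by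
    intro n
    rw [hc]
    simp [hirotaD_odd τ (2 * n + 1) ⟨n, by ring⟩]
  -- LHS = sum of c over all m < 2(N+1)
  have hL : (∑ n ∈ Finset.range (N + 1),
        (δ ^ (2 * n) / ((2 * n).factorial : ℝ)) * (hirotaD τ τ (2 * n)).eval t)
      = ∑ m ∈ Finset.range (2 * (N + 1)), c m := by
    rw [sum_even_of_odd_zero c hodd (N + 1)]
  rw [hL]
  -- Cauchy product rearrangement
  have hflip := Finset.sum_range_diag_flip (2 * (N + 1)) (fun k l => a k * b l)
  calc ∑ m ∈ Finset.range (2 * (N + 1)), c m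
      = ∑ m ∈ Finset.range (2 * (N + 1)), ∑ k ∈ Finset.range (m + 1), a k * b (m - k) :=
        Finset.sum_congr rfl fun m _ => hcm m
    _ = ∑ m ∈ Finset.range (2 * (N + 1)), ∑ k ∈ Finset.range (2 * (N + 1) - m), a m * b k :=
        hflip
    _ = ∑ m ∈ Finset.range (2 * (N + 1)), a m * ∑ k ∈ Finset.range (2 * (N + 1) - m), b k := by
        refine Finset.sum_congr rfl fun m _ => ?_
        rw [Finset.mul_sum]
    _ = ∑ m ∈ Finset.range (N + 1), a m * ∑ k ∈ Finset.range (2 * (N + 1) - m), b k := by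
        refine (Finset.sum_subset (Finset.range_subset_range.mpr (by omega)) ?_).symm
        intro m _ hm
        rw [Finset.mem_range, not_lt] at hm
        rw [ha0 m (by omega), zero_mul]
    _ = ∑ m ∈ Finset.range (N + 1), a m * ∑ k ∈ Finset.range (N + 1), b k := by
        refine Finset.sum_congr rfl fun m hm => ?_
        rw [Finset.mem_range] at hm
        congr 1
        refine (Finset.sum_subset (Finset.range_subset_range.mpr (by omega)) ?_).symm
        intro k _ hk
        rw [Finset.mem_range, not_lt] at hk
        exact hb0 k (by omega)
    _ = (∑ m ∈ Finset.range (N + 1), a m) * ∑ k ∈ Finset.range (N + 1), b k := by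
        rw [← Finset.sum_mul]
    _ = τ.eval (t + δ) * τ.eval (t - δ) := by rw [← hA, ← hB]
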